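/- Let F_q have characteristic p > 3 and let 0 < s < ℓ be integers. Then for every x in F_q, D_{p^s+p^ℓ,k}(1,x) = (k/4)·((1−4x)^{(p^s−1)/2} + (1−4x)^{(p^ℓ−1)/2}) − ((k−2)/4)·(1 + (1−4x)^{(p^s+p^ℓ)/2}). -/

import Mathlib

open Finset

/-- The `n`-th reversed Dickson polynomial of the `(k+1)`-th kind, evaluated at `(a, x)`.
For `n ≥ 1` it is `∑_{i=0}^{⌊n/2⌋} ((n-ki)/(n-i))·C(n-i,i)·(-x)^i·a^{n-2i}`, where the
integer coefficient `((n-ki)/(n-i))·C(n-i,i)` is written as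
`k·C(n-i,i) - (k-1)·(n/(n-i))·C(n-i,i)` and `(n/(n-i))·C(n-i,i) = C(n-i,i) + C(n-i-1,i-1)`
(equal to `1` when `i = 0`). For `n = 0` it is `2 - k`. -/
noncomputable def revDickson {F : Type*} [Field F] (k : ℤ) (n : ℕ) (a x : F) : F :=
  if n = 0 then ((2 - k : ℤ) : F) else
    ∑ i ∈ Finset.range (n / 2 + 1),
      ((k * ((n - i).choose i : ℤ) -
          (k - 1) * (if i = 0 then 1 else ((n - i).choose i : ℤ) + ((n - i - 1).choose (i - 1) : ℤ))) : F)
        * (-x) ^ i * a ^ (n - 2 * i)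

def rdCoef (k : ℤ) (n i : ℕ) : ℤ :=
  k * ((n - i).choose i : ℤ) -
    (k - 1) * (if i = 0 then 1 else ((n - i).choose i : ℤ) + ((n - i - 1).choose (i - 1) : ℤ))

lemma revDickson_def {F : Type*} [Field F] (k : ℤ) {n : ℕ} (hn : n ≠ 0) (x : F) :
    revDickson k n 1 x = ∑ i ∈ Finset.range (n / 2 + 1), (rdCoef k n i : F) * (-x) ^ i := by
  simp [revDickson, rdCoef, hn]

lemma rdCoef_zero (k : ℤ) (n : ℕ) : rdCoef k n 0 = 1 := by
  simp [rdCoef]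

lemma rdCoef_step (k : ℤ) (n i : ℕ) (hi : 1 ≤ i) (hin : i ≤ n / 2 + 1) :
    rdCoef k (n+2) i = rdCoef k (n+1) i + rdCoef k n (i-1) := by
  rcases i with _ | i
  · omega
  rcases i with _ | j
  · -- i = 1
    have e1 : n + 2 - 1 = n + 1 := by omega
    have e2 : n + 1 - 1 = n := by omega
    have e3 : n + 2 - 1 - 1 = n := by omega
    have e4 : n + 1 - 1 - 1 = n - 1 := by omega
    simp only [rdCoef, e1, e2, e3, e4]
    simp [Nat.choose_one_right]
    push_cast
    ring
  · -- i = j + 2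
    have hn : 2 * j + 2 ≤ n := by omega
    obtain ⟨m, hm⟩ : ∃ m, n - j = m + 2 := ⟨n - j - 2, by omega⟩
    have e1 : n + 2 - (j+2) = m + 2 := by omega
    have e2 : n + 2 - (j+2) - 1 = m + 1 := by omega
    have e3 : n + 1 - (j+2) = m + 1 := by omega
    have e4 : n + 1 - (j+2) - 1 = m := by omega
    have e5 : n - (j+1) = m + 1 := by omega
    have e6 : n - (j+1) - 1 = m := by omega
    have e7 : j + 2 - 1 = j + 1 := by omega
    have e8 : j + 1 - 1 = j := by omega
    simp only [rdCoef, e1, e2, e3, e4, e7, show (j+2 : ℕ) ≠ 0 by omega, show (j+1:ℕ) ≠ 0 by omega,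
      if_neg, Nat.add_sub_cancel]
    rw [e6, e5, show m + 2 - 1 = m + 1 by omega]
    simp only [if_false]
    rw [show (m+2).choose (j+2) = (m+1).choose (j+1) + (m+1).choose (j+2) from Nat.choose_succ_succ _ _,
        show (m+1).choose (j+1) = m.choose j + m.choose (j+1) from Nat.choose_succ_succ _ _]
    push_cast
    ring

lemma revDickson_rec {F : Type*} [Field F] (k : ℤ) (n : ℕ) (x : F) :
    revDickson k (n+2) 1 x = revDickson k (n+1) 1 x - x * revDickson k n 1 x := by
  rcases Nat.eq_zero_or_pos n with rfl | hn
  · rw [revDickson_def k (show (2:ℕ) ≠ 0 by norm_num) x,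
      revDickson_def k (show (1:ℕ) ≠ 0 by norm_num) x]
    have h0 : revDickson k 0 1 x = ((2 - k : ℤ) : F) := by simp [revDickson]
    rw [h0]
    norm_num [Finset.sum_range_succ, rdCoef]
    push_cast; ring
  · have hne : n ≠ 0 := by omega
    rw [revDickson_def k (show n+2 ≠ 0 by omega) x, revDickson_def k (show n+1 ≠ 0 by omega) x,
        revDickson_def k hne x]
    have h2 : (n+2)/2 + 1 = (n/2 + 1) + 1 := by omega
    rw [h2, Finset.sum_range_succ']
    have step : ∀ i ∈ Finset.range (n/2+1), ((rdCoef k (n+2) (i+1) : F)) * (-x)^(i+1)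
        = (rdCoef k (n+1) (i+1) : F) * (-x)^(i+1) + (-x) * ((rdCoef k n i : F) * (-x)^i) := by
      intro i hi
      simp only [Finset.mem_range] at hi
      rw [rdCoef_step k n (i+1) (by omega) (by omega)]
      rw [show i+1-1 = i by omega]
      push_cast
      ring
    rw [Finset.sum_congr rfl step, Finset.sum_add_distrib, ← Finset.mul_sum]
    have e0 : (rdCoef k (n+2) 0 : F) * (-x)^0 = (rdCoef k (n+1) 0 : F) * (-x)^0 := by
      rw [rdCoef_zero, rdCoef_zero]
    have comb : (∑ i ∈ Finset.range (n/2+1), ((rdCoef k (n+1) (i+1) : F)) * (-x)^(i+1))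
          + (rdCoef k (n+1) 0 : F) * (-x)^0
        = ∑ i ∈ Finset.range (n/2+1+1), (rdCoef k (n+1) i : F) * (-x)^i :=
      (Finset.sum_range_succ' (fun i => (rdCoef k (n+1) i : F) * (-x)^i) _).symm
    rw [add_right_comm, e0, comb]
    have hsum : ∑ i ∈ Finset.range (n/2+1+1), (rdCoef k (n+1) i : F) * (-x)^i
        = ∑ i ∈ Finset.range ((n+1)/2+1), (rdCoef k (n+1) i : F) * (-x)^i := by
      rcases Nat.even_or_odd n with he | ho
      · rw [Nat.even_iff] at he
        have ht : n/2 + 1 + 1 = ((n+1)/2 + 1) + 1 := by omega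
        rw [ht, Finset.sum_range_succ]
        have hz : rdCoef k (n+1) ((n+1)/2 + 1) = 0 := by
          have hnn : (n+1)/2 + 1 = n/2 + 1 := by omega
          have h1 : (n+1) - (n/2+1) = n/2 := by omega
          have h1' : (n+1) - (n/2+1) - 1 = n/2 - 1 := by omega
          have hc1 : (n/2).choose (n/2+1) = 0 := Nat.choose_eq_zero_of_lt (by omega)
          have hc2 : (n/2-1).choose (n/2+1-1) = 0 := Nat.choose_eq_zero_of_lt (by omega)
          simp only [rdCoef, hnn, h1, h1', if_neg (show ¬ (n/2+1 = 0) by omega), hc1, hc2]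
          push_cast; ring
        rw [hz]
        simp
      · rw [Nat.odd_iff] at ho
        rw [show n/2+1+1 = (n+1)/2+1 by omega]
    rw [hsum]
    ring

lemma twoStep {P : ℕ → Prop} (h0 : P 0) (h1 : P 1)
    (hstep : ∀ n, P n → P (n+1) → P (n+2)) : ∀ n, P n := by
  have H : ∀ n, P n ∧ P (n+1) := by
    intro n
    induction n with
    | zero => exact ⟨h0, h1⟩
    | succ m ih => exact ⟨ih.2, hstep m ih.1 ih.2⟩
  exact fun n => (H n).1

lemma revDickson_zero {F : Type*} [Field F] (k : ℤ) (x : F) :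
    revDickson k 0 1 x = 2 - (k : F) := by
  simp [revDickson]

lemma revDickson_one {F : Type*} [Field F] (k : ℤ) (x : F) :
    revDickson k 1 1 x = 1 := by
  rw [revDickson_def k one_ne_zero x]
  simp [rdCoef]

lemma closedForm {F : Type*} [Field F] (k : ℤ) (y : F) (hy : 2*y - 1 ≠ 0) (n : ℕ) :
    revDickson k n 1 (y*(1-y)) =
      (((k:F) - 1 - ((k:F)-2)*y)*y^n - (1+((k:F)-2)*y)*(1-y)^n)/(2*y-1) := by
  induction n using twoStep with
  | h0 => rw [revDickson_zero]; field_simp; ring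
  | h1 => rw [revDickson_one]; field_simp; ring
  | hstep n ih1 ih2 => rw [revDickson_rec, ih1, ih2]; field_simp; ring

lemma quarterForm {F : Type*} [Field F] (k : ℤ) (h2 : (2:F) ≠ 0) (n : ℕ) :
    revDickson k n 1 (1/(4:F)) = ((2:F) - k + k*n)/2^n := by
  have h4 : (4:F) ≠ 0 := by
    intro h
    apply h2
    have : (4:F) = 2*2 := by norm_num
    rw [this] at h
    exact (mul_self_eq_zero.mp h)
  induction n using twoStep with
  | h0 => rw [revDickson_zero]; push_cast; norm_num
  | h1 => rw [revDickson_one]; push_cast; field_simp; ring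
  | hstep n ih1 ih2 =>
      have hpow : (2:F)^n ≠ 0 := pow_ne_zero _ h2
      rw [revDickson_rec, ih1, ih2]
      push_cast
      field_simp
      ring


lemma revDickson_map {F K : Type*} [Field F] [Field K] (φ : F →+* K) (k : ℤ) (n : ℕ) (x : F) :
    φ (revDickson k n 1 x) = revDickson k n 1 (φ x) := by
  simp only [revDickson, apply_ite φ, map_intCast, map_sub, map_mul, map_natCast,
    map_sum, map_pow, map_neg, map_one]

lemma two_pow_char_pow {K : Type*} [Field K] {p : ℕ} [Fact p.Prime] [CharP K p] (m : ℕ) :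
    (2:K) ^ (p ^ m) = 2 := by
  induction m with
  | zero => simp
  | succ m ih =>
      rw [pow_succ, pow_mul, ih, show (2:K) = 1 + 1 by norm_num, add_pow_char]
      norm_num

lemma sub_one_pow_char_pow {K : Type*} [Field K] {p : ℕ} [Fact p.Prime] [CharP K p]
    (m : ℕ) (y : K) : (2*y - 1) ^ (p ^ m) = 2 * y ^ (p ^ m) - 1 := by
  rw [sub_pow_char_pow, mul_pow, two_pow_char_pow, one_pow]

lemma main_aux {K : Type*} [Field K] [IsAlgClosed K] {p : ℕ} [CharP K p]
    (hp : p.Prime) (h3 : 3 < p) (k : ℤ) (s l : ℕ) (hs : 0 < s) (hsl : s < l) (z : K) :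
    revDickson k (p ^ s + p ^ l) 1 z =
      (k : K) / 4 * ((1 - 4 * z) ^ ((p ^ s - 1) / 2) + (1 - 4 * z) ^ ((p ^ l - 1) / 2))
        - ((k : K) - 2) / 4 * (1 + (1 - 4 * z) ^ ((p ^ s + p ^ l) / 2)) := by
  haveI : Fact p.Prime := ⟨hp⟩
  have hp2 : p ≠ 2 := by omega
  have h2K : (2:K) ≠ 0 := by
    have h : ((2:ℕ):K) ≠ 0 := by
      rw [Ne, CharP.cast_eq_zero_iff K p]
      intro hdvd
      have := Nat.le_of_dvd (by norm_num) hdvd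
      omega
    simpa using h
  have h4K : (4:K) ≠ 0 := by
    intro h
    apply h2K
    have h44 : (4:K) = 2*2 := by norm_num
    rw [h44] at h
    exact mul_self_eq_zero.mp h
  obtain ⟨y, hy⟩ : ∃ y : K, (Polynomial.X^2 - Polynomial.X + Polynomial.C z).IsRoot y := by
    apply IsAlgClosed.exists_root
    have hdeg : (Polynomial.X^2 - Polynomial.X + Polynomial.C z : Polynomial K).degree = 2 := by
      compute_degree!
    rw [hdeg]
    norm_num
  have hz : z = y * (1 - y) := by
    have h := hy
    simp [Polynomial.IsRoot] at h
    linear_combination h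
  have hodds : Odd (p ^ s) := (hp.odd_of_ne_two hp2).pow
  have hoddl : Odd (p ^ l) := (hp.odd_of_ne_two hp2).pow
  have hp5 : 5 ≤ p := by
    have h4 : p ≠ 4 := by intro h; rw [h] at hp; norm_num at hp
    omega
  have hps : 5 ≤ p ^ s := le_trans hp5 (Nat.le_self_pow hs.ne' p)
  have hpl : 5 ≤ p ^ l := le_trans hp5 (Nat.le_self_pow (n := l) (by omega) p)
  subst hz
  by_cases hy1 : 2*y - 1 = 0
  · -- y = 1/2 case
    have hzq : y * (1-y) = 1/(4:K) := by
      field_simp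
      linear_combination (1 - 2*y) * hy1
    rw [hzq, quarterForm k h2K]
    have hp0 : ((p:ℕ):K) = 0 := CharP.cast_eq_zero K p
    have hcast : (((p ^ s + p ^ l : ℕ)) : K) = 0 := by
      push_cast
      rw [hp0, zero_pow hs.ne', zero_pow (by omega : l ≠ 0)]
      norm_num
    have h14 : (1:K) - 4*(1/4) = 0 := by field_simp; ring
    have h2pow : (2:K)^(p^s+p^l) = 4 := by
      rw [pow_add, two_pow_char_pow, two_pow_char_pow]; norm_num
    rw [h14, hcast, h2pow,
      zero_pow (by omega : (p^s-1)/2 ≠ 0), zero_pow (by omega : (p^l-1)/2 ≠ 0),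
      zero_pow (by omega : (p^s+p^l)/2 ≠ 0)]
    field_simp
    try ring
  · -- generic case
    rw [closedForm k y hy1]
    have hu : (1:K) - 4*(y*(1-y)) = (2*y-1)^2 := by ring
    have e1 : 2 * ((p^s-1)/2) = p^s - 1 := by rcases hodds with ⟨t, ht⟩; omega
    have e2 : 2 * ((p^l-1)/2) = p^l - 1 := by rcases hoddl with ⟨t, ht⟩; omega
    have e3 : 2 * ((p^s+p^l)/2) = p^s+p^l := by
      rcases hodds with ⟨t, ht⟩; rcases hoddl with ⟨u, hu'⟩; omega
    have hfs : (2*y-1)^(p^s) = 2*y^(p^s) - 1 := sub_one_pow_char_pow s y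
    have hfl : (2*y-1)^(p^l) = 2*y^(p^l) - 1 := sub_one_pow_char_pow l y
    have hys : (1-y)^(p^s) = 1 - y^(p^s) := by rw [sub_pow_char_pow, one_pow]
    have hyl : (1-y)^(p^l) = 1 - y^(p^l) := by rw [sub_pow_char_pow, one_pow]
    have hinvs : (2*y-1)^(p^s - 1) = (2*y^(p^s) - 1)/(2*y-1) := by
      rw [eq_div_iff hy1, ← pow_succ, show p^s - 1 + 1 = p^s by omega, hfs]
    have hinvl : (2*y-1)^(p^l - 1) = (2*y^(p^l) - 1)/(2*y-1) := by
      rw [eq_div_iff hy1, ← pow_succ, show p^l - 1 + 1 = p^l by omega, hfl]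
    rw [hu, ← pow_mul, ← pow_mul, ← pow_mul, e1, e2, e3, hinvs, hinvl,
      pow_add, pow_add (1-y), pow_add (2*y-1), hys, hyl, hfs, hfl]
    generalize y^(p^s) = Y
    generalize y^(p^l) = Z
    field_simp
    ring

theorem stmt_11 {F : Type*} [Field F] [Fintype F] {p : ℕ} [CharP F p]
    (hp : p.Prime) (h3 : 3 < p) (k : ℤ) (s l : ℕ) (hs : 0 < s) (hsl : s < l) (x : F) :
    revDickson k (p ^ s + p ^ l) 1 x =
      (k : F) / 4 * ((1 - 4 * x) ^ ((p ^ s - 1) / 2) + (1 - 4 * x) ^ ((p ^ l - 1) / 2))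
        - ((k : F) - 2) / 4 * (1 + (1 - 4 * x) ^ ((p ^ s + p ^ l) / 2)) := by
  let K := AlgebraicClosure F
  let φ : F →+* K := algebraMap F K
  have hφ : Function.Injective φ := φ.injective
  haveI : CharP K p := charP_of_injective_ringHom hφ p
  apply hφ
  rw [revDickson_map φ, main_aux hp h3 k s l hs hsl (φ x)]
  simp only [map_sub, map_mul, map_add, map_div₀, map_pow, map_one, map_ofNat, map_intCast]
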